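/- Let $\bar N_{\bar N}^1, \ldots, \bar N_{\bar N}^n$ be the counts of a multinomial random variable with $\bar N$ trials and probabilities $\pi_i = N^i / N$, where $N = \sum_{i=1}^n N^i$ and $2\bar N \le N$. Then $\mathbb{P}\Big( \sum_{i=1}^n (\bar N_{\bar N}^i - N^i)_+ > \frac{7}{4} \log(nN) \sum_{j : N^j < 6\log(nN)} \sqrt{N^j} \Big) \le \frac{1}{N}$, where $(x)_+ = \max(x,0)$. -/

import Mathlib

open MeasureTheory ProbabilityTheory

/-- Chernoff bound for the count of independent events with common probability `p`. -/
lemma count_chernoff {Ω : Type*} [MeasurableSpace Ω] (μ : Measure Ω) [IsProbabilityMeasure μ]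
    {m k : ℕ} (M : Fin m → Ω → Fin k) (hmeas : ∀ j, Measurable (M j))
    (hind : iIndepFun M μ) (i : Fin k) {p : ℝ} (hp0 : 0 ≤ p)
    (hp : ∀ j, (μ {ω | M j ω = i}).toReal = p) (s c : ℝ) (hs : 0 ≤ s) :
    (μ {ω | c ≤ (((Finset.univ.filter (fun j => M j ω = i)).card : ℕ) : ℝ)}).toReal
      ≤ Real.exp (-s * c + m * p * (Real.exp s - 1)) := by
  classical
  set g : Fin k → ℝ := fun v => if v = i then 1 else 0 with hg
  set X : Fin m → Ω → ℝ := fun j => g ∘ M j with hXdef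
  have hA : ∀ j, MeasurableSet {ω | M j ω = i} := fun j => hmeas j (MeasurableSet.singleton i)
  have hXite : ∀ j ω, X j ω = if M j ω = i then 1 else 0 := fun j ω => rfl
  have hXmeas : ∀ j, Measurable (X j) := fun j => Measurable.of_discrete.comp (hmeas j)
  have hXind : iIndepFun X μ :=
    hind.comp (fun _ => g) fun _ => Measurable.of_discrete
  have hXexp : ∀ j, (fun ω => Real.exp (s * X j ω)) = fun ω => 1 + (Real.exp s - 1) * X j ω := by
    intro j; funext ω
    by_cases h : M j ω = i
    · simp [hXite, h]
    · simp [hXite, h]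
  have hXindic : ∀ j, X j = Set.indicator {ω | M j ω = i} (fun _ => (1 : ℝ)) := by
    intro j; funext ω
    by_cases h : M j ω = i <;> simp [hXite, h, Set.indicator]
  have hXint : ∀ j, Integrable (X j) μ := by
    intro j
    rw [hXindic j]
    exact (integrable_const (1 : ℝ)).indicator (hA j)
  have hexpint : ∀ j, Integrable (fun ω => Real.exp (s * X j ω)) μ := by
    intro j; rw [hXexp j]
    exact (integrable_const (1 : ℝ)).add ((hXint j).const_mul _)
  have hintX : ∀ j, ∫ ω, X j ω ∂μ = p := by
    intro j
    have h1 : ∫ ω, X j ω ∂μ = ∫ ω, Set.indicator {ω | M j ω = i} (fun _ => (1:ℝ)) ω ∂μ := by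
      rw [hXindic j]
    have h2 : (fun ω => Set.indicator {ω | M j ω = i} (fun _ => (1:ℝ)) ω)
        = fun ω => Set.indicator {ω | M j ω = i} (1 : Ω → ℝ) ω := rfl
    rw [h1, h2, integral_indicator_one (hA j)]; exact hp j
  have hmgf : ∀ j, mgf (X j) μ s = 1 + p * (Real.exp s - 1) := by
    intro j
    have : mgf (X j) μ s = ∫ ω, Real.exp (s * X j ω) ∂μ := rfl
    rw [this, hXexp j,
      integral_add (integrable_const 1) ((hXint j).const_mul _), integral_const,
      integral_const_mul, hintX j]
    simp [measure_univ]
    ring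
  have hsum : ∀ ω, (((Finset.univ.filter (fun j => M j ω = i)).card : ℕ) : ℝ)
      = (∑ j, X j) ω := by
    intro ω
    rw [Finset.card_filter]
    push_cast
    rw [Finset.sum_apply]
    refine Finset.sum_congr rfl fun j _ => ?_
    by_cases h : M j ω = i <;> simp [hXite, h]
  have hintsum : Integrable (fun ω => Real.exp (s * (∑ j, X j) ω)) μ :=
    hXind.integrable_exp_mul_sum hXmeas fun j _ => hexpint j
  have hy : 0 ≤ p * (Real.exp s - 1) :=
    mul_nonneg hp0 (by linarith [Real.one_le_exp hs])
  calc (μ {ω | c ≤ (((Finset.univ.filter (fun j => M j ω = i)).card : ℕ) : ℝ)}).toReal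
      = (μ {ω | c ≤ (∑ j, X j) ω}).toReal := by
        have hset : {ω | c ≤ (((Finset.univ.filter (fun j => M j ω = i)).card : ℕ) : ℝ)}
            = {ω | c ≤ (∑ j, X j) ω} := by
          ext ω; simp only [Set.mem_setOf_eq, hsum]
        rw [hset]
    _ ≤ Real.exp (-s * c) * mgf (∑ j, X j) μ s :=
        measure_ge_le_exp_mul_mgf c hs hintsum
    _ = Real.exp (-s * c) * ∏ j, mgf (X j) μ s := by
        rw [hXind.mgf_sum hXmeas]
    _ ≤ Real.exp (-s * c + m * p * (Real.exp s - 1)) := by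
        have h1 : ∀ j ∈ Finset.univ, mgf (X j) μ s = 1 + p * (Real.exp s - 1) :=
          fun j _ => hmgf j
        rw [Finset.prod_congr rfl h1, Finset.prod_const, Finset.card_univ, Fintype.card_fin]
        have h2 : (1 + p * (Real.exp s - 1)) ^ m ≤ Real.exp (p * (Real.exp s - 1)) ^ m := by
          apply pow_le_pow_left₀ (by linarith)
          linarith [Real.add_one_le_exp (p * (Real.exp s - 1))]
        calc Real.exp (-s * c) * (1 + p * (Real.exp s - 1)) ^ m
            ≤ Real.exp (-s * c) * Real.exp (p * (Real.exp s - 1)) ^ m := by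
              have := Real.exp_nonneg (-s * c)
              nlinarith [h2]
          _ = Real.exp (-s * c + m * p * (Real.exp s - 1)) := by
              rw [← Real.exp_nat_mul, ← Real.exp_add]
              ring_nf

set_option maxHeartbeats 1600000 in
open MeasureTheory ProbabilityTheory Classical in
/-- Multinomial overshoot bound: with probability at least `1 - 1/N`, the total
overshoot of the multinomial counts beyond the per-agent capacities is
controlled by the small agents only. -/
theorem stmt_12 (Ω : Type*) [MeasurableSpace Ω] (μ : Measure Ω) [IsProbabilityMeasure μ]
    (n : ℕ) (hn : 0 < n) (Nc : Fin n → ℕ) (hNc : ∀ i, 1 ≤ Nc i)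
    (Nt : ℕ) (hNt : Nt = ∑ i, Nc i)
    (Nbar : ℕ) (hNbar : 2 * Nbar ≤ Nt)
    (M : Fin Nbar → Ω → Fin n) (hmeas : ∀ j, Measurable (M j))
    (hind : iIndepFun M μ)
    (hlaw : ∀ (j : Fin Nbar) (i : Fin n),
      (μ {ω | M j ω = i}).toReal = (Nc i : ℝ) / Nt)
    (B : Fin n → Ω → ℕ)
    (hB : ∀ i ω, B i ω = (Finset.univ.filter (fun j => M j ω = i)).card) :
    (μ {ω | (7 / 4 : ℝ) * Real.log (n * Nt) *
          ∑ j ∈ Finset.univ.filter (fun j => (Nc j : ℝ) < 6 * Real.log (n * Nt)),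
            Real.sqrt (Nc j)
        < (∑ i, (B i ω - Nc i) : ℕ)}).toReal ≤ 1 / Nt := by
  classical
  -- basic positivity facts
  have hNt1 : 1 ≤ Nt := by
    rw [hNt]
    calc 1 ≤ n := hn
    _ = ∑ _i : Fin n, 1 := by simp
    _ ≤ ∑ i, Nc i := Finset.sum_le_sum fun i _ => hNc i
  have hNtpos : (0 : ℝ) < (Nt : ℝ) := by exact_mod_cast hNt1
  have hnN1 : 1 ≤ n * Nt := Nat.one_le_iff_ne_zero.mpr (by positivity)
  have hnNpos : (0 : ℝ) < ((n : ℝ) * (Nt : ℝ)) := by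
    have : (0:ℝ) < (n:ℝ) := by exact_mod_cast hn
    positivity
  set L : ℝ := Real.log (n * Nt) with hLdef
  have hL0 : 0 ≤ L := by
    rw [hLdef]
    apply Real.log_nonneg
    have : (1:ℝ) ≤ ((n * Nt : ℕ) : ℝ) := by exact_mod_cast hnN1
    push_cast at this
    linarith
  have hexpL : Real.exp L = (n : ℝ) * (Nt : ℝ) := by
    rw [hLdef]; exact Real.exp_log hnNpos
  -- per-agent thresholds and events
  set c : Fin n → ℝ := fun i =>
    if (Nc i : ℝ) < 6 * L then (Nc i : ℝ) + 7 / 4 * L * Real.sqrt (Nc i)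
    else (Nc i : ℝ) + 1 with hc
  set A : Fin n → Set Ω := fun i => {ω | c i ≤ (B i ω : ℝ)} with hA
  -- log 2 / log 3 numerics
  have hlog2lb : (0.6931471803 : ℝ) < Real.log 2 := Real.log_two_gt_d9
  have hlog2ub : Real.log 2 < (0.6931471808 : ℝ) := Real.log_two_lt_d9
  have hlog98 : (1/9 : ℝ) ≤ Real.log (9/8) := by
    have h1 : Real.log (8/9 : ℝ) ≤ 8/9 - 1 := Real.log_le_sub_one_of_pos (by norm_num)
    have h2 : Real.log (9/8 : ℝ) = -Real.log (8/9 : ℝ) := by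
      rw [← Real.log_inv]; norm_num
    rw [h2]; linarith
  have hlog3 : (3/2 : ℝ) * Real.log 2 + 1/18 ≤ Real.log 3 := by
    have h9 : Real.log 9 = 2 * Real.log 3 := by
      rw [show (9:ℝ) = 3 ^ 2 by norm_num, Real.log_pow]; push_cast; ring
    have h9' : Real.log 9 = 3 * Real.log 2 + Real.log (9/8 : ℝ) := by
      rw [show (9:ℝ) = 2 ^ 3 * (9/8) by norm_num,
        Real.log_mul (by norm_num) (by norm_num), Real.log_pow]
      push_cast; ring
    linarith
  have hlog3pos : (0 : ℝ) ≤ Real.log 3 := by linarith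
  have hlog2pos : (0 : ℝ) ≤ Real.log 2 := by linarith
  -- inclusion of the bad event in the union of per-agent events
  have hsub : {ω | (7 / 4 : ℝ) * Real.log (n * Nt) *
          ∑ j ∈ Finset.univ.filter (fun j => (Nc j : ℝ) < 6 * Real.log (n * Nt)),
            Real.sqrt (Nc j)
        < (∑ i, (B i ω - Nc i) : ℕ)} ⊆ ⋃ i, A i := by
    intro ω hω
    by_contra hcon
    simp only [Set.mem_iUnion, not_exists] at hcon
    have hlt : ∀ i, (B i ω : ℝ) < c i := by
      intro i
      have := hcon i
      rw [hA] at this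
      simpa [Set.mem_setOf_eq, not_le] using this
    apply absurd hω
    simp only [Set.mem_setOf_eq, not_lt]
    have hterm : ∀ i, ((B i ω - Nc i : ℕ) : ℝ)
        ≤ if (Nc i : ℝ) < 6 * L then 7 / 4 * L * Real.sqrt (Nc i) else 0 := by
      intro i
      have hi := hlt i
      by_cases hs : (Nc i : ℝ) < 6 * L
      · rw [if_pos hs]
        rw [hc] at hi
        simp only [if_pos hs] at hi
        by_cases hle : B i ω ≤ Nc i
        · rw [Nat.sub_eq_zero_of_le hle]
          have : (0:ℝ) ≤ Real.sqrt (Nc i) := Real.sqrt_nonneg _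
          push_cast
          nlinarith
        · push_neg at hle
          rw [Nat.cast_sub hle.le]
          linarith
      · rw [if_neg hs]
        rw [hc] at hi
        simp only [if_neg hs] at hi
        have hle : B i ω ≤ Nc i := by
          have : (B i ω : ℝ) < ((Nc i : ℕ) : ℝ) + 1 := hi
          exact_mod_cast Nat.lt_succ_iff.mp (by exact_mod_cast this)
        rw [Nat.sub_eq_zero_of_le hle]
        norm_num
    calc ((∑ i, (B i ω - Nc i) : ℕ) : ℝ)
        = ∑ i, ((B i ω - Nc i : ℕ) : ℝ) := by push_cast; rfl
      _ ≤ ∑ i, (if (Nc i : ℝ) < 6 * L then 7 / 4 * L * Real.sqrt (Nc i) else 0) :=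
          Finset.sum_le_sum fun i _ => hterm i
      _ = ∑ j ∈ Finset.univ.filter (fun j => (Nc j : ℝ) < 6 * L),
            7 / 4 * L * Real.sqrt (Nc j) := by
          rw [Finset.sum_filter]
      _ = (7 / 4 : ℝ) * Real.log (n * Nt) *
            ∑ j ∈ Finset.univ.filter (fun j => (Nc j : ℝ) < 6 * Real.log (n * Nt)),
              Real.sqrt (Nc j) := by
          rw [Finset.mul_sum]
  -- per-agent probability bound
  have hbound : ∀ i, (μ (A i)).toReal ≤ 1 / (2 * ((n : ℝ) * (Nt : ℝ))) := by
    intro i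
    have hx1 : (1 : ℝ) ≤ (Nc i : ℝ) := by exact_mod_cast hNc i
    have hppos : (0 : ℝ) ≤ (Nc i : ℝ) / (Nt : ℝ) := by positivity
    have hmean : (Nbar : ℝ) * ((Nc i : ℝ) / (Nt : ℝ)) ≤ (Nc i : ℝ) / 2 := by
      have h2N : (2 : ℝ) * (Nbar : ℝ) ≤ (Nt : ℝ) := by
        have : ((2 * Nbar : ℕ) : ℝ) ≤ ((Nt : ℕ) : ℝ) := by exact_mod_cast hNbar
        push_cast at this
        linarith
      have hx0 : (0:ℝ) ≤ (Nc i : ℝ) := by positivity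
      rw [← mul_div_assoc, div_le_div_iff₀ hNtpos two_pos]
      nlinarith [mul_nonneg hx0 (by linarith : (0:ℝ) ≤ (Nt:ℝ) - 2*(Nbar:ℝ))]
    have hAeq : A i = {ω | c i ≤
        (((Finset.univ.filter (fun j => M j ω = i)).card : ℕ) : ℝ)} := by
      rw [hA]
      ext ω
      simp only [Set.mem_setOf_eq, hB]
    have htarget : 1 / (2 * ((n : ℝ) * (Nt : ℝ))) = Real.exp (-(L + Real.log 2)) := by
      rw [Real.exp_neg, Real.exp_add, hexpL, Real.exp_log two_pos]
      rw [one_div, mul_comm]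
    by_cases hsml : (Nc i : ℝ) < 6 * L
    · -- small agent : use s = log 3
      have hL2 : Real.log 2 ≤ L := by
        have hLpos : (0 : ℝ) < L := by linarith
        have h1 : (1 : ℝ) < (n : ℝ) * (Nt : ℝ) := by
          calc (1:ℝ) = Real.exp 0 := Real.exp_zero.symm
          _ < Real.exp L := Real.exp_lt_exp.mpr hLpos
          _ = _ := hexpL
        have h1' : 1 < n * Nt := by
          have : (1:ℝ) < ((n * Nt : ℕ) : ℝ) := by push_cast; linarith
          exact_mod_cast this
        have h2 : (2 : ℝ) ≤ (n : ℝ) * (Nt : ℝ) := by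
          have h2' : 2 ≤ n * Nt := h1'
          have : ((2:ℕ):ℝ) ≤ ((n * Nt : ℕ) : ℝ) := by exact_mod_cast h2'
          push_cast at this
          linarith
        have := Real.log_le_log two_pos h2
        rw [hLdef]
        exact this
      have key := count_chernoff μ M hmeas hind i hppos (fun j => hlaw j i)
        (Real.log 3) (c i) hlog3pos
      rw [← hAeq] at key
      refine key.trans ?_
      rw [htarget]
      apply Real.exp_le_exp.mpr
      rw [Real.exp_log (by norm_num : (0:ℝ) < 3)]
      have hci : c i = (Nc i : ℝ) + 7 / 4 * L * Real.sqrt (Nc i) := by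
        rw [hc]; simp only [if_pos hsml]
      rw [hci]
      have hsq1 : (1 : ℝ) ≤ Real.sqrt (Nc i) := Real.one_le_sqrt.mpr hx1
      set x : ℝ := (Nc i : ℝ)
      set q : ℝ := Real.sqrt (Nc i)
      set a : ℝ := Real.log 3
      set t2 : ℝ := Real.log 2
      -- need : -a * (x + 7/4 * L * q) + Nbar * (x/Nt) * (3 - 1) ≤ -(L + t2)
      have hmean2 : (Nbar : ℝ) * (x / (Nt : ℝ)) * (3 - 1) ≤ x := by linarith
      have ha : (197/180 : ℝ) ≤ a := by linarith
      have e1 : (0:ℝ) ≤ (a - 1) * (x - 1) :=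
        mul_nonneg (by linarith) (by linarith)
      have e2 : (0:ℝ) ≤ a * L * (q - 1) :=
        mul_nonneg (mul_nonneg (by linarith) hL0) (by linarith)
      have e3 : (0:ℝ) ≤ (7/4 * a - 1) * (L - t2) :=
        mul_nonneg (by linarith) (by linarith)
      have e4 : (0:ℝ) ≤ (a - 197/180) * t2 :=
        mul_nonneg (by linarith) (by linarith)
      nlinarith [e1, e2, e3, e4]
    · -- large agent : use s = log 2
      have hx6 : 6 * L ≤ (Nc i : ℝ) := le_of_not_gt hsml
      have key := count_chernoff μ M hmeas hind i hppos (fun j => hlaw j i)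
        (Real.log 2) (c i) hlog2pos
      rw [← hAeq] at key
      refine key.trans ?_
      rw [htarget]
      apply Real.exp_le_exp.mpr
      rw [Real.exp_log two_pos]
      have hci : c i = (Nc i : ℝ) + 1 := by
        rw [hc]; simp only [if_neg hsml]
      rw [hci]
      set x : ℝ := (Nc i : ℝ)
      set t2 : ℝ := Real.log 2
      have hmean2 : (Nbar : ℝ) * (x / (Nt : ℝ)) * (2 - 1) ≤ x / 2 := by linarith
      have e1 : (0:ℝ) ≤ (x - 6 * L) * (t2 - 1/2) :=
        mul_nonneg (by linarith) (by linarith)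
      have e2 : (0:ℝ) ≤ L * (t2 - 0.6931471803) :=
        mul_nonneg hL0 (by linarith)
      nlinarith [e1, e2]
  -- combine with the union bound
  have h1 : μ {ω | (7 / 4 : ℝ) * Real.log (n * Nt) *
          ∑ j ∈ Finset.univ.filter (fun j => (Nc j : ℝ) < 6 * Real.log (n * Nt)),
            Real.sqrt (Nc j)
        < (∑ i, (B i ω - Nc i) : ℕ)} ≤ ∑ i, μ (A i) := by
    refine (measure_mono hsub).trans ?_
    have hu := measure_biUnion_finset_le (μ := μ) Finset.univ A
    simpa using hu
  have h2 : (μ {ω | (7 / 4 : ℝ) * Real.log (n * Nt) *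
          ∑ j ∈ Finset.univ.filter (fun j => (Nc j : ℝ) < 6 * Real.log (n * Nt)),
            Real.sqrt (Nc j)
        < (∑ i, (B i ω - Nc i) : ℕ)}).toReal ≤ (∑ i, μ (A i)).toReal := by
    apply ENNReal.toReal_mono _ h1
    exact ENNReal.sum_ne_top.mpr fun i _ => measure_ne_top μ _
  rw [ENNReal.toReal_sum fun i _ => measure_ne_top μ _] at h2
  refine h2.trans ?_
  calc ∑ i, (μ (A i)).toReal
      ≤ ∑ _i : Fin n, 1 / (2 * ((n : ℝ) * (Nt : ℝ))) :=
        Finset.sum_le_sum fun i _ => hbound i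
    _ = (n : ℝ) * (1 / (2 * ((n : ℝ) * (Nt : ℝ)))) := by
        rw [Finset.sum_const, Finset.card_univ, Fintype.card_fin, nsmul_eq_mul]
    _ ≤ 1 / (Nt : ℝ) := by
        have hnpos : (0 : ℝ) < (n : ℝ) := by exact_mod_cast hn
        rw [mul_one_div, div_le_div_iff₀ (by positivity) hNtpos]
        nlinarith
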